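/- Let K, m be natural numbers, L a real number, θ : Fin K → Fin m → ℝ a family of local model vectors, and z : Fin K → Fin K → Fin m → AddCircle (1 : ℝ) a family of mask vectors. Define the encrypted update of client k coordinatewise by p k i = π(θ k i / L) + ∑_{j, k < j} z k j i − ∑_{j, j < k} z j k i, where π : ℝ → AddCircle (1 : ℝ) is the canonical quotient map. Then for every coordinate i, ∑_{k ∈ Fin K} p k i = ∑_{k ∈ Fin K} π(θ k i / L); that is, the server's aggregate of the encrypted updates equals the image on the torus of the scaled aggregate of the local models. -/
import Mathlib

/-- Correctness of torus-based secure aggregation: if each client `k` sends the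
encrypted update `p k i = (θ k i / L : ℝ) + ∑_{j > k} z k j i - ∑_{j < k} z j k i`
on the torus `AddCircle (1 : ℝ)`, then the server's aggregate of the encrypted
updates equals the image on the torus of the scaled aggregate of local models. -/
theorem torus_secure_aggregation_correct (K m : ℕ) (L : ℝ)
    (θ : Fin K → Fin m → ℝ)
    (z : Fin K → Fin K → Fin m → AddCircle (1 : ℝ))
    (p : Fin K → Fin m → AddCircle (1 : ℝ))
    (hp : ∀ k i, p k i =
      ((θ k i / L : ℝ) : AddCircle (1 : ℝ))
        + (∑ j ∈ Finset.univ.filter (fun j => k < j), z k j i)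
        - ∑ j ∈ Finset.univ.filter (fun j => j < k), z j k i)
    (i : Fin m) :
    ∑ k : Fin K, p k i = ∑ k : Fin K, ((θ k i / L : ℝ) : AddCircle (1 : ℝ)) := by
  simp only [hp, Finset.sum_sub_distrib, Finset.sum_add_distrib]
  have : (∑ k : Fin K, ∑ j ∈ Finset.univ.filter (fun j => k < j), z k j i)
      = ∑ k : Fin K, ∑ j ∈ Finset.univ.filter (fun j => j < k), z j k i := by
    exact Finset.sum_comm' (fun x y => by simp)
  rw [this]
  abel
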